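/- Let m ≥ 1 be an integer and let B_m be the (m+1)×(m+1) real matrix defined below. Then det B_m ≠ 0, i.e., B_m is nonsingular. -/

import Mathlib

open Polynomial


/-- The matrix `B_m` of the paper: first row `(B_m)_{0,j} = j + 1`, and for
`1 ≤ i ≤ m`: `(B_m)_{i,i} = 3i + 4 - m`, `(B_m)_{i,i-1} = m + 1 - i`,
`(B_m)_{i,i+1} = 2(i+1)`, all other entries `0`. -/
noncomputable def paperB (m : ℕ) : Matrix (Fin (m + 1)) (Fin (m + 1)) ℝ :=
  Matrix.of fun i j =>
    if (i : ℕ) = 0 then ((j : ℕ) : ℝ) + 1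
    else if (i : ℕ) = (j : ℕ) then 3 * ((i : ℕ) : ℝ) + 4 - (m : ℝ)
    else if (i : ℕ) = (j : ℕ) + 1 then (m : ℝ) + 1 - ((i : ℕ) : ℝ)
    else if (j : ℕ) = (i : ℕ) + 1 then 2 * (((i : ℕ) : ℝ) + 1)
    else 0


noncomputable def pA : ℝ := (3 - Real.sqrt 17) / 2
noncomputable def pB : ℝ := (3 + Real.sqrt 17) / 2

lemma sqrt17_sq : Real.sqrt 17 ^ 2 = 17 := Real.sq_sqrt (by norm_num)

lemma sqrt17_irr : Irrational (Real.sqrt 17) := by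
  have : (17 : ℝ) = ((17 : ℕ) : ℝ) := by norm_num
  rw [this]
  exact (by norm_num : Nat.Prime 17).irrational_sqrt

lemma pA_ne_pB : pA ≠ pB := by
  have h : 0 < Real.sqrt 17 := Real.sqrt_pos.mpr (by norm_num)
  unfold pA pB; intro h'; nlinarith

lemma pA_sq : pA ^ 2 = 3 * pA + 2 := by
  unfold pA; linear_combination sqrt17_sq / 4

lemma pB_sq : pB ^ 2 = 3 * pB + 2 := by
  unfold pB; linear_combination sqrt17_sq / 4

lemma pA_add_pB : pA + pB = 3 := by unfold pA pB; ring

lemma pA_mul_pB : pA * pB = -2 := by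
  unfold pA pB; linear_combination (-1/4 : ℝ) * sqrt17_sq

lemma lin_pA_ne (a b : ℤ) (h : 3 * a + 2 * b ≠ 0) : (a : ℝ) * pA + b ≠ 0 := by
  intro he
  rcases eq_or_ne a 0 with ha | ha
  · subst ha; simp at he; exact h (by omega)
  · apply sqrt17_irr
    refine ⟨(3 * a + 2 * b : ℤ) / (a : ℚ), ?_⟩
    have ha' : (a : ℝ) ≠ 0 := Int.cast_ne_zero.mpr ha
    unfold pA at he
    push_cast
    field_simp
    linear_combination 2 * he

lemma lin_pB_ne (a b : ℤ) (h : 3 * a + 2 * b ≠ 0) : (a : ℝ) * pB + b ≠ 0 := by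
  intro he
  rcases eq_or_ne a 0 with ha | ha
  · subst ha; simp at he; exact h (by omega)
  · apply sqrt17_irr
    refine ⟨-((3 * a + 2 * b : ℤ) / (a : ℚ)), ?_⟩
    have ha' : (a : ℝ) ≠ 0 := Int.cast_ne_zero.mpr ha
    unfold pB at he
    push_cast
    field_simp
    linear_combination -2 * he

lemma quad_factor : (X ^ 2 - C 3 * X - C 2 : ℝ[X]) = (X - C pA) * (X - C pB) := by
  have h3 : (C (3:ℝ) : ℝ[X]) = C pA + C pB := by rw [← C_add, pA_add_pB]
  have h2 : (C (2:ℝ) : ℝ[X]) = -(C pA * C pB) := by rw [← C_mul, pA_mul_pB]; simp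
  rw [h3, h2]; ring

lemma quad_ne_zero : ((X - C pA) * (X - C pB) : ℝ[X]) ≠ 0 :=
  mul_ne_zero (X_sub_C_ne_zero pA) (X_sub_C_ne_zero pB)

lemma ode_poly_zero : ∀ (n : ℕ) (g : ℝ[X]) (a b : ℤ), g.natDegree ≤ n →
    3 * a + 2 * b ≠ 0 →
    (C 2 + C 3 * X - X ^ 2) * derivative g + (C (a : ℝ) * X + C (b : ℝ)) * g = 0 →
    g = 0 := by
  intro n
  induction n using Nat.strong_induction_on with
  | _ n IH =>
    intro g a b hdeg hab heq
    by_contra hg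
    -- evaluate at pA
    have hevA : g.eval pA = 0 := by
      have h1 := congrArg (fun p => Polynomial.eval pA p) heq
      simp only [eval_add, eval_mul, eval_sub, eval_pow, eval_C, eval_X, eval_zero] at h1
      have h2 : (2 : ℝ) + 3 * pA - pA ^ 2 = 0 := by linear_combination -pA_sq
      rw [h2, zero_mul, zero_add] at h1
      rcases mul_eq_zero.mp h1 with h | h
      · exact absurd h (lin_pA_ne a b hab)
      · exact h
    have hevB : g.eval pB = 0 := by
      have h1 := congrArg (fun p => Polynomial.eval pB p) heq
      simp only [eval_add, eval_mul, eval_sub, eval_pow, eval_C, eval_X, eval_zero] at h1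
      have h2 : (2 : ℝ) + 3 * pB - pB ^ 2 = 0 := by linear_combination -pB_sq
      rw [h2, zero_mul, zero_add] at h1
      rcases mul_eq_zero.mp h1 with h | h
      · exact absurd h (lin_pB_ne a b hab)
      · exact h
    obtain ⟨g1, hg1⟩ := (dvd_iff_isRoot.mpr hevA : (X - C pA) ∣ g)
    have hevB1 : g1.eval pB = 0 := by
      have := hevB
      rw [hg1] at this
      simp only [eval_mul, eval_sub, eval_X, eval_C] at this
      have hne : pB - pA ≠ 0 := sub_ne_zero.mpr (Ne.symm pA_ne_pB)
      exact (mul_eq_zero.mp this).resolve_left hne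
    obtain ⟨h, hh⟩ := (dvd_iff_isRoot.mpr hevB1 : (X - C pB) ∣ g1)
    have hgfact : g = (X ^ 2 - C 3 * X - C 2) * h := by rw [hg1, hh, quad_factor]; ring
    have hhne : h ≠ 0 := by rintro rfl; exact hg (by simp [hgfact])
    have hQne : (X ^ 2 - C 3 * X - C 2 : ℝ[X]) ≠ 0 := by rw [quad_factor]; exact quad_ne_zero
    have hder : derivative (X ^ 2 - C 3 * X - C 2 : ℝ[X]) = C 2 * X - C 3 := by
      simp [derivative_X_pow]
      rw [one_add_one_eq_two]; exact (map_ofNat C 2).symm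
    -- new ODE for h
    have hkey : (X ^ 2 - C 3 * X - C 2 : ℝ[X]) *
        ((C 2 + C 3 * X - X ^ 2) * derivative h +
          (C ((a - 2 : ℤ) : ℝ) * X + C ((b + 3 : ℤ) : ℝ)) * h) = 0 := by
      rw [hgfact] at heq
      rw [derivative_mul, hder] at heq
      have hca : (C ((a - 2 : ℤ) : ℝ) : ℝ[X]) = C (a : ℝ) - C 2 := by
        push_cast; rw [C_sub]
      have hcb : (C ((b + 3 : ℤ) : ℝ) : ℝ[X]) = C (b : ℝ) + C 3 := by
        push_cast; rw [C_add]
      rw [hca, hcb]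
      linear_combination heq
    have hode : (C 2 + C 3 * X - X ^ 2) * derivative h +
        (C ((a - 2 : ℤ) : ℝ) * X + C ((b + 3 : ℤ) : ℝ)) * h = 0 :=
      (mul_eq_zero.mp hkey).resolve_left hQne
    -- degree drop
    have hdegg : g.natDegree = 2 + h.natDegree := by
      rw [hgfact, natDegree_mul hQne hhne, quad_factor,
        natDegree_mul (X_sub_C_ne_zero pA) (X_sub_C_ne_zero pB),
        natDegree_X_sub_C, natDegree_X_sub_C]
    have hlt : h.natDegree < n := by omega
    have := IH h.natDegree hlt h (a - 2) (b + 3) le_rfl (by omega) hode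
    exact hhne this

/-- The matrix `B_m` is nonsingular. -/
theorem det_paperB_ne_zero (m : ℕ) (hm : 1 ≤ m) : (paperB m).det ≠ 0 := by
  intro hdet
  obtain ⟨v, hv0, hv⟩ := (Matrix.exists_mulVec_eq_zero_iff).mpr hdet
  set c : ℕ → ℝ := fun j => if h : j < m + 1 then v ⟨j, h⟩ else 0 with hc
  have hcv : ∀ j : Fin (m + 1), c (j : ℕ) = v j := by
    intro j; simp only [hc]; rw [dif_pos j.isLt]
  have hczero : ∀ j, m + 1 ≤ j → c j = 0 := by
    intro j hj; simp only [hc]; rw [dif_neg (by omega)]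
  have hrow : ∀ i : Fin (m + 1), ∑ j : Fin (m + 1), paperB m i j * v j = 0 := by
    intro i
    have := congrFun hv i
    simpa [Matrix.mulVec, dotProduct] using this
  have sum_ind : ∀ (t : ℕ) (A : ℝ),
      (∑ j : Fin (m + 1), (if (j : ℕ) = t then A else 0)) = if t < m + 1 then A else 0 := by
    intro t A
    rw [Fin.sum_univ_eq_sum_range (fun j => if j = t then A else 0) (m + 1)]
    rw [Finset.sum_ite_eq' (Finset.range (m + 1)) t (fun _ => A)]
    simp [Finset.mem_range]
  -- row 0
  have hrow0 : ∑ j ∈ Finset.range (m + 1), ((j : ℝ) + 1) * c j = 0 := by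
    have h0 := hrow ⟨0, by omega⟩
    rw [show (∑ j : Fin (m+1), paperB m ⟨0, by omega⟩ j * v j)
        = ∑ j : Fin (m+1), (fun jn : ℕ => ((jn : ℝ) + 1) * c jn) (j : ℕ) from
      Finset.sum_congr rfl (fun j _ => by
        simp only [paperB, Matrix.of_apply]
        rw [if_pos trivial, hcv])] at h0
    rw [Fin.sum_univ_eq_sum_range (fun jn : ℕ => ((jn : ℝ) + 1) * c jn) (m + 1)] at h0
    exact h0
  -- recurrence, valid for all k
  have hrec : ∀ k : ℕ, ((m : ℝ) - k) * c k + (3 * ((k : ℝ) + 1) + 4 - m) * c (k + 1)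
      + 2 * ((k : ℝ) + 2) * c (k + 2) = 0 := by
    intro k
    rcases Nat.lt_or_ge (k + 1) (m + 1) with hk | hk
    · -- genuine row k+1
      have h0 := hrow ⟨k + 1, hk⟩
      have hpt : ∀ j : Fin (m + 1), paperB m ⟨k + 1, hk⟩ j * v j =
            (if (j : ℕ) = k then ((m : ℝ) - k) * c k else 0) +
            (if (j : ℕ) = k + 1 then (3 * ((k : ℝ) + 1) + 4 - m) * c (k + 1) else 0) +
            (if (j : ℕ) = k + 2 then 2 * ((k : ℝ) + 2) * c (k + 2) else 0) := by
        intro j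
        simp only [paperB, Matrix.of_apply]
        rw [← hcv j]
        rcases eq_or_ne (j : ℕ) k with hj | hj
        · rw [hj]
          rw [if_neg (by omega), if_neg (by omega), if_pos (by omega),
            if_pos rfl, if_neg (by omega), if_neg (by omega)]
          push_cast; ring
        · rcases eq_or_ne (j : ℕ) (k + 1) with hj2 | hj2
          · rw [hj2]
            rw [if_neg (by omega), if_pos (by omega), if_neg (by omega),
              if_pos rfl, if_neg (by omega)]
            push_cast; ring
          · rcases eq_or_ne (j : ℕ) (k + 2) with hj3 | hj3
            · rw [hj3]
              rw [if_neg (by omega), if_neg (by omega), if_neg (by omega),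
                if_pos (by omega), if_neg (by omega), if_neg (by omega), if_pos rfl]
              push_cast; ring
            · rw [if_neg (by omega), if_neg (by omega), if_neg (by omega),
                if_neg (by omega), if_neg hj, if_neg hj2, if_neg hj3]
              ring
      rw [Finset.sum_congr rfl (fun j _ => hpt j)] at h0
      rw [Finset.sum_add_distrib, Finset.sum_add_distrib] at h0
      rw [sum_ind k, sum_ind (k + 1), sum_ind (k + 2)] at h0
      rw [if_pos (by omega : k < m + 1), if_pos (by omega : k + 1 < m + 1)] at h0
      rcases Nat.lt_or_ge (k + 2) (m + 1) with hk2 | hk2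
      · rw [if_pos hk2] at h0
        linarith [h0]
      · rw [if_neg (by omega)] at h0
        rw [hczero (k + 2) (by omega)]
        linarith [h0]
    · -- beyond the matrix: everything vanishes
      have h2 : c (k + 1) = 0 := hczero _ (by omega)
      have h3 : c (k + 2) = 0 := hczero _ (by omega)
      rcases Nat.lt_or_ge k (m + 1) with hk1 | hk1
      · have : k = m := by omega
        subst this
        rw [h2, h3]; ring_nf
      · rw [h2, h3, hczero k (by omega)]; ring
  -- the generating polynomial
  set g : ℝ[X] := ∑ i ∈ Finset.range (m + 1), C (c i) * X ^ i with hgdef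
  have hgcoeff : ∀ k, g.coeff k = c k := by
    intro k
    rw [hgdef, finset_sum_coeff]
    simp only [coeff_C_mul, coeff_X_pow, mul_ite, mul_one, mul_zero]
    rw [Finset.sum_ite_eq (Finset.range (m + 1)) k (fun i => c i)]
    split_ifs with h
    · rfl
    · rw [hczero k (by simp [Finset.mem_range] at h; omega)]
  have hd : ∀ n : ℕ, (derivative g).coeff n = ((n : ℝ) + 1) * c (n + 1) := by
    intro n
    rw [coeff_derivative, hgcoeff]
    push_cast; ring
  set F : ℝ[X] := (C 2 + C 3 * X - X ^ 2) * derivative g +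
      (C ((m : ℤ) : ℝ) * X + C (((4 - m : ℤ)) : ℝ)) * g with hFdef
  have hFsplit : F = C 2 * derivative g + C 3 * (X * derivative g) - derivative g * X ^ 2
      + (C ((m : ℤ) : ℝ) * (X * g) + C (((4 - m : ℤ)) : ℝ) * g) := by
    rw [hFdef]; ring
  have hFco : ∀ k : ℕ, F.coeff (k + 1) = 0 := by
    intro k
    rw [hFsplit]
    rw [coeff_add, coeff_sub, coeff_add, coeff_add, coeff_C_mul, coeff_C_mul,
      coeff_C_mul, coeff_C_mul, coeff_X_mul, coeff_X_mul, coeff_mul_X_pow']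
    cases k with
    | zero =>
      rw [if_neg (by omega)]
      rw [hd, hd, hgcoeff, hgcoeff]
      have h0 := hrec 0
      push_cast at h0 ⊢
      linear_combination h0
    | succ j =>
      rw [if_pos (by omega)]
      rw [show j + 1 + 1 - 2 = j from by omega]
      rw [hd, hd, hd, hgcoeff, hgcoeff]
      have h0 := hrec (j + 1)
      push_cast at h0 ⊢
      linear_combination h0
  have hFC : F = C (F.coeff 0) := by
    apply Polynomial.ext
    intro n
    cases n with
    | zero => rw [coeff_C, if_pos rfl]
    | succ j => rw [hFco j, coeff_C, if_neg (by omega)]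
  have hsum1 : g.eval 1 + (derivative g).eval 1 = 0 := by
    have hg1 : g.eval 1 = ∑ i ∈ Finset.range (m + 1), c i := by
      rw [hgdef, eval_finset_sum]
      apply Finset.sum_congr rfl
      intro i _
      simp
    have hg2 : (derivative g).eval 1 = ∑ i ∈ Finset.range (m + 1), c i * i := by
      rw [hgdef, derivative_sum]
      rw [eval_finset_sum]
      apply Finset.sum_congr rfl
      intro i _
      rw [derivative_C_mul_X_pow]
      simp
    rw [hg1, hg2, ← Finset.sum_add_distrib]
    rw [← hrow0]
    apply Finset.sum_congr rfl
    intro i _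
    ring
  have hFeval : F.eval 1 = 0 := by
    rw [hFdef]
    simp only [eval_add, eval_mul, eval_sub, eval_pow, eval_C, eval_X, one_pow, mul_one]
    push_cast
    linear_combination (4 : ℝ) * hsum1
  have hF0 : F = 0 := by
    have h1 : F.eval 1 = F.coeff 0 := by
      conv_lhs => rw [hFC]
      rw [eval_C]
    rw [hFC, ← h1, hFeval, map_zero]
  have hgzero : g = 0 := by
    refine ode_poly_zero g.natDegree g (m : ℤ) (4 - (m : ℤ)) le_rfl (by omega) ?_
    rw [← hFdef, hF0]
  apply hv0
  funext i
  have : c (i : ℕ) = 0 := by rw [← hgcoeff, hgzero, coeff_zero]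
  rw [← hcv i, this]
  rfl
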